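/- Let U be an ℓ×ℓ complex unitary matrix with spectral decomposition U = Σ_{r=1}^m λ_r F_r, and let M̂ = Σ_r F_r ∘ conj(F_r) be its average mixing matrix. Then M̂ is positive semidefinite, I − M̂ is positive semidefinite (so every eigenvalue of M̂ lies in [0,1]), and the all-ones vector is an eigenvector of M̂ with eigenvalue 1. -/

import Mathlib

open Matrix Finset
open scoped ComplexOrder

private lemma psd_add {n : ℕ} {A B : Matrix (Fin n) (Fin n) ℂ}
    (hA : A.PosSemidef) (hB : B.PosSemidef) : (A + B).PosSemidef := by
  refine PosSemidef.of_dotProduct_mulVec_nonneg (hA.1.add hB.1) fun x => ?_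
  rw [add_mulVec, dotProduct_add]
  exact add_nonneg (hA.dotProduct_mulVec_nonneg x) (hB.dotProduct_mulVec_nonneg x)

private lemma psd_sum {n k : ℕ} (s : Finset (Fin k)) (f : Fin k → Matrix (Fin n) (Fin n) ℂ)
    (h : ∀ i ∈ s, (f i).PosSemidef) : (∑ i ∈ s, f i).PosSemidef := by
  classical
  induction s using Finset.induction_on with
  | empty =>
    simp only [Finset.sum_empty]
    exact ⟨Matrix.isHermitian_zero, fun x => by simp⟩
  | insert _ _ hi ih =>
    rw [Finset.sum_insert hi]
    exact psd_add (h _ (Finset.mem_insert_self _ _)) (ih fun i his => h i (Finset.mem_insert_of_mem his))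

private lemma rot3 {n : ℕ} (f : Fin n → Fin n → Fin n → ℂ) :
    ∑ a, ∑ b, ∑ c, f a b c = ∑ b, ∑ c, ∑ a, f a b c := by
  rw [Finset.sum_comm]
  exact Finset.sum_congr rfl fun b _ => Finset.sum_comm

private lemma hadamard_psd {n : ℕ} {A B C : Matrix (Fin n) (Fin n) ℂ}
    (hA : A = Cᴴ * C) (hB : B.PosSemidef) :
    (Matrix.hadamard A B).PosSemidef := by
  have hAps : A.PosSemidef := hA ▸ Matrix.posSemidef_conjTranspose_mul_self C
  refine posSemidef_iff_dotProduct_mulVec.mpr ⟨?_, ?_⟩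
  · ext i j
    simp only [conjTranspose_apply, hadamard_apply, star_mul']
    rw [hAps.1.apply, hB.1.apply, mul_comm]
  · intro x
    have key : star x ⬝ᵥ (Matrix.hadamard A B) *ᵥ x
        = ∑ k, star (fun j => C k j * x j) ⬝ᵥ B *ᵥ (fun j => C k j * x j) := by
      subst hA
      simp only [dotProduct, mulVec, hadamard_apply, Matrix.mul_apply, conjTranspose_apply,
        Pi.star_apply, star_mul', Finset.sum_mul, Finset.mul_sum]
      rw [rot3, rot3]
      refine Finset.sum_congr rfl fun k _ => Finset.sum_congr rfl fun i _ =>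
        Finset.sum_congr rfl fun j _ => ?_
      ring
    rw [key]
    exact Finset.sum_nonneg fun k _ => hB.dotProduct_mulVec_nonneg _

/-- The average mixing matrix `M̂ = ∑ r, F_r ∘ conj(F_r)` of a quantum walk with
spectral idempotents `F_r`, where `∘` is the entrywise (Hadamard) product and
`conj` is entrywise complex conjugation. -/
noncomputable def avgMix {ℓ m : ℕ} (F : Fin m → Matrix (Fin ℓ) (Fin ℓ) ℂ) :
    Matrix (Fin ℓ) (Fin ℓ) ℂ :=
  ∑ r, Matrix.hadamard (F r) ((F r).map (starRingEnd ℂ))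

/-- The average mixing matrix is positive semidefinite, I − M̂ is positive semidefinite, and the all-ones vector is an eigenvector for the eigenvalue 1. -/
theorem avgMix_posSemidef (ℓ m : ℕ) (hℓ : 0 < ℓ)
    (U : Matrix (Fin ℓ) (Fin ℓ) ℂ)
    (hU : U ∈ Matrix.unitaryGroup (Fin ℓ) ℂ)
    (lam : Fin m → ℂ) (F : Fin m → Matrix (Fin ℓ) (Fin ℓ) ℂ)
    (hdist : Function.Injective lam)
    (hmod : ∀ r, ‖lam r‖ = 1)
    (hherm : ∀ r, (F r)ᴴ = F r)
    (hidem : ∀ r, F r * F r = F r)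
    (horth : ∀ r s, r ≠ s → F r * F s = 0)
    (hsum : ∑ r, F r = 1)
    (hspec : U = ∑ r, lam r • F r)
    :
    (avgMix F).PosSemidef ∧
      (1 - avgMix F).PosSemidef ∧
      avgMix F *ᵥ (fun _ => (1 : ℂ)) = fun _ => (1 : ℂ) := by
  classical
  have hstar : ∀ r (i j : Fin ℓ), (starRingEnd ℂ) (F r i j) = F r j i := by
    intro r i j
    have := congrFun (congrFun (hherm r) j) i
    simpa [Matrix.conjTranspose_apply] using this
  have hconj : ∀ s, (F s).map (starRingEnd ℂ) = (F s)ᵀ := by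
    intro s; ext i j
    simp [Matrix.map_apply, Matrix.transpose_apply, hstar s i j]
  have hpsdT : ∀ s, ((F s)ᵀ).PosSemidef := by
    intro s
    have hTH : ((F s)ᵀ)ᴴ = (F s)ᵀ := by
      ext i j
      simp [Matrix.conjTranspose_apply, Matrix.transpose_apply, hstar]
    have h : (F s)ᵀ = ((F s)ᵀ)ᴴ * (F s)ᵀ := by
      rw [hTH, ← Matrix.transpose_mul, hidem]
    exact h ▸ Matrix.posSemidef_conjTranspose_mul_self _
  have hH : ∀ r s, (Matrix.hadamard (F r) ((F s).map (starRingEnd ℂ))).PosSemidef := by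
    intro r s
    rw [hconj s]
    exact hadamard_psd (C := F r) (by rw [hherm]; exact (hidem r).symm) (hpsdT s)
  have part1 : (avgMix F).PosSemidef := by
    unfold avgMix
    exact psd_sum _ _ fun r _ => hH r r
  refine ⟨part1, ?_, ?_⟩
  · -- 1 - avgMix PSD
    have h1 : (1 : Matrix (Fin ℓ) (Fin ℓ) ℂ)
        = ∑ r, ∑ s, Matrix.hadamard (F r) ((F s).map (starRingEnd ℂ)) := by
      ext i j
      simp only [Matrix.sum_apply, Matrix.hadamard_apply, Matrix.map_apply]
      rw [← Finset.sum_mul_sum]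
      have e1 : ∑ r, F r i j = (1 : Matrix (Fin ℓ) (Fin ℓ) ℂ) i j := by
        rw [← hsum, Matrix.sum_apply]
      have e2 : ∑ s, (starRingEnd ℂ) (F s i j) = (starRingEnd ℂ) ((1 : Matrix (Fin ℓ) (Fin ℓ) ℂ) i j) := by
        rw [← map_sum, e1]
      rw [e1, e2]
      by_cases h : i = j <;> simp [Matrix.one_apply, h]
    have h2 : 1 - avgMix F
        = ∑ r, ∑ s ∈ Finset.univ.erase r, Matrix.hadamard (F r) ((F s).map (starRingEnd ℂ)) := by
      rw [h1]
      unfold avgMix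
      rw [← Finset.sum_sub_distrib]
      refine Finset.sum_congr rfl fun r _ => ?_
      rw [Finset.sum_erase_eq_sub (Finset.mem_univ r)]
    rw [h2]
    exact psd_sum _ _ fun r _ => psd_sum _ _ fun s _ => hH r s
  · funext i
    simp only [Matrix.mulVec, dotProduct, avgMix, Matrix.sum_apply,
      Matrix.hadamard_apply, Matrix.map_apply, mul_one]
    rw [Finset.sum_comm]
    have : ∀ r, ∑ j, F r i j * (starRingEnd ℂ) (F r i j) = F r i i := by
      intro r
      have : ∑ j, F r i j * (starRingEnd ℂ) (F r i j) = (F r * F r) i i := by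
        rw [Matrix.mul_apply]
        exact Finset.sum_congr rfl fun j _ => by rw [hstar]
      rw [this, hidem]
    simp_rw [this]
    have := congrFun (congrFun hsum i) i
    simpa [Matrix.sum_apply, Matrix.one_apply] using this
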